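/- Let λ be a regular uncountable cardinal, S ⊆ {δ < λ⁺ : cf(δ) = λ}, C̄ = ⟨C_δ : δ ∈ S⟩ a sequence where each C_δ is a club of δ of order type λ, and h̄ = ⟨h_δ : δ ∈ S⟩ with h_δ : C_δ → λ. Then for every ordinal β < λ⁺ the set I_β = {f ∈ Q²_{C̄,h̄} : β < α_f} is dense in Q²_{C̄,h̄}: every condition f of Q²_{C̄,h̄} has an extension f' in Q²_{C̄,h̄} whose domain α_{f'} exceeds β. -/

import Mathlib

/-- `C` is a club of the limit ordinal `δ`: a subset of `δ`, unbounded in `δ`,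
closed below `δ`. -/
def IsClubBelow (C : Set Ordinal.{0}) (δ : Ordinal.{0}) : Prop :=
  (∀ α ∈ C, α < δ) ∧ (∀ α < δ, ∃ β ∈ C, α ≤ β) ∧
    ∀ B ⊆ C, B.Nonempty → sSup B < δ → sSup B ∈ C

/-- The order type of a set of ordinals. -/
noncomputable def otype (C : Set Ordinal.{0}) : Ordinal.{1} :=
  Ordinal.type (Subrel ((· < ·) : Ordinal.{0} → Ordinal.{0} → Prop) (· ∈ C))

/-- Conditions of the forcing notion `Q²_{C̄,h̄}`: pairs `(α, f)` with `α < λ⁺`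
representing a function `f : α → λ` such that for every `δ ∈ S` with `δ ≤ α` there is
`γ < δ` with `f β = h δ β` for all `β ∈ C_δ ∖ γ`. -/
def Q2Cond (lam : Cardinal.{0}) (S : Set Ordinal.{0}) (C : Ordinal.{0} → Set Ordinal.{0})
    (h : Ordinal.{0} → Ordinal.{0} → Ordinal.{0})
    (α : Ordinal.{0}) (f : Ordinal.{0} → Ordinal.{0}) : Prop :=
  α < (Order.succ lam).ord ∧ (∀ β < α, f β < lam.ord) ∧
    ∀ δ ∈ S, δ ≤ α → ∃ γ < δ, ∀ β ∈ C δ, γ ≤ β → f β = h δ β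

/-- The order of `Q²_{C̄,h̄}` is extension of functions. -/
def Q2Le (α₀ : Ordinal.{0}) (f₀ : Ordinal.{0} → Ordinal.{0})
    (α₁ : Ordinal.{0}) (f₁ : Ordinal.{0} → Ordinal.{0}) : Prop :=
  α₀ ≤ α₁ ∧ ∀ β < α₀, f₁ β = f₀ β

private lemma lemA (lam : Cardinal.{0}) {δ' δ : Ordinal.{0}} (hcf : δ'.cof = lam)
    {Cδ : Set Ordinal.{0}} (hclub : IsClubBelow Cδ δ)
    (hot : otype Cδ = Ordinal.lift.{1} lam.ord)
    (hlt : δ' < δ) : ∃ b < δ', ∀ ξ ∈ Cδ, ξ < δ' → ξ < b := by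
  classical
  haveI hWO : IsWellOrder δ'.ToType ((· < ·) : δ'.ToType → δ'.ToType → Prop) :=
    isWellOrder_lt
  obtain ⟨x₀, hx₀C, hx₀⟩ := hclub.2.1 δ' hlt
  by_contra hcon
  push_neg at hcon
  set T : Set δ'.ToType := {x : δ'.ToType | Ordinal.typein (α := δ'.ToType) (· < ·) x ∈ Cδ} with hT
  have hunb : Set.Unbounded (· < ·) T := by
    intro x
    obtain ⟨ξ, hξC, hξδ, hbx⟩ := hcon _ (Ordinal.typein_lt_self x)
    refine ⟨Ordinal.enum (α := δ'.ToType) (· < ·)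
      ⟨ξ, Set.mem_Iio.2 (by rwa [Ordinal.type_toType])⟩, ?_, ?_⟩
    · show Ordinal.typein _ _ ∈ Cδ
      convert hξC using 1; exact Ordinal.typein_enum _ _
    · intro hlt'
      have h2 := (Ordinal.typein_lt_typein (α := δ'.ToType) (· < ·)).2 hlt'
      erw [Ordinal.typein_enum] at h2
      exact absurd h2 (not_lt.2 hbx)
  have h1 : lam ≤ Cardinal.mk T := by
    have := Order.cof_le (s := T) (fun x => let ⟨y, hy, hxy⟩ := hunb x; ⟨y, hy, not_lt.1 hxy⟩)
    rwa [Ordinal.cof_toType, hcf] at this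
  set r : ↥Cδ → ↥Cδ → Prop := Subrel ((· < ·) : Ordinal.{0} → Ordinal.{0} → Prop) (· ∈ Cδ) with hr
  set a : ↥Cδ := ⟨x₀, hx₀C⟩ with ha
  have hemb : Nonempty (T ↪ {y : ↥Cδ // r y a}) := by
    refine ⟨⟨fun x => ⟨⟨Ordinal.typein (α := δ'.ToType) (· < ·) x.1, x.2⟩,
      lt_of_lt_of_le (Ordinal.typein_lt_self x.1) hx₀⟩, ?_⟩⟩
    intro x y hxy
    have := congrArg (fun z => (z.1.1 : Ordinal.{0})) hxy
    simp only at this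
    exact Subtype.ext ((Ordinal.typein_inj (α := δ'.ToType) (· < ·)).1 this)
  have hcard : Cardinal.mk {y : ↥Cδ // r y a} < Cardinal.lift.{1,0} lam := by
    have h3 : Ordinal.typein r a < Ordinal.type r := Ordinal.typein_lt_type r a
    rw [show Ordinal.type r = otype Cδ from rfl, hot, Cardinal.lift_ord] at h3
    have h4 := Cardinal.lt_ord.1 h3
    rwa [← Ordinal.card_typein]
  have h5 : Cardinal.lift.{1,0} (Cardinal.mk T) ≤ Cardinal.mk {y : ↥Cδ // r y a} := by
    have := Cardinal.lift_mk_le'.2 hemb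
    rwa [Cardinal.lift_id'] at this
  exact absurd h1 (not_le.2 (Cardinal.lift_lt.1 (h5.trans_lt hcard)))

private lemma q2le_trans {a₀ f₀ a₁ f₁ a₂ f₂} (h₁ : Q2Le a₀ f₀ a₁ f₁) (h₂ : Q2Le a₁ f₁ a₂ f₂) :
    Q2Le a₀ f₀ a₂ f₂ :=
  ⟨h₁.1.trans h₂.1, fun b hb => (h₂.2 b (hb.trans_le h₁.1)).trans (h₁.2 b hb)⟩

private lemma exists_wf_rec {α : Type*} [Nonempty α]
    (r : Ordinal.{0} → α → (Ordinal.{0} → α) → Prop)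
    (hmono : ∀ i g (G G' : Ordinal.{0} → α), (∀ j, j < i → G j = G' j) → r i g G → r i g G')
    (hex : ∀ (G : Ordinal.{0} → α) (i), (∀ j, j < i → r j (G j) G) → ∃ g, r i g G) :
    ∃ G : Ordinal.{0} → α, ∀ i, r i (G i) G := by
  classical
  have inh : α := Classical.arbitrary α
  let E : (i : Ordinal.{0}) → ((j : Ordinal.{0}) → j < i → α) → Ordinal.{0} → α :=
    fun i prev j => if hj : j < i then prev j hj else inh
  let body : (i : Ordinal.{0}) → ((j : Ordinal.{0}) → j < i → α) → α :=
    fun i prev => if H : ∃ g, r i g (E i prev) then H.choose else inh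
  let G : Ordinal.{0} → α := Ordinal.lt_wf.fix body
  have hGeq : ∀ i, G i = body i fun j _ => G j := fun i => Ordinal.lt_wf.fix_eq body i
  refine ⟨G, fun i => ?_⟩
  induction i using Ordinal.induction with
  | h i IH =>
    have hEG : ∀ j, j < i → E i (fun j hj => G j) j = G j := fun j hj => dif_pos hj
    have H : ∃ g, r i g (E i fun j _ => G j) := by
      obtain ⟨g, hg⟩ := hex G i IH
      exact ⟨g, hmono i g G _ (fun j hj => (hEG j hj).symm) hg⟩
    have hGi : G i = H.choose := by
      rw [hGeq i]
      exact dif_pos H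
    rw [hGi]
    exact hmono i _ _ G hEG H.choose_spec

private lemma q2main (lam : Cardinal.{0}) (hreg : lam.IsRegular)
    (S : Set Ordinal.{0}) (hS : ∀ δ ∈ S, δ < (Order.succ lam).ord ∧ δ.cof = lam)
    (C : Ordinal.{0} → Set Ordinal.{0})
    (hC : ∀ δ ∈ S, IsClubBelow (C δ) δ ∧ otype (C δ) = Ordinal.lift.{1} lam.ord)
    (h : Ordinal.{0} → Ordinal.{0} → Ordinal.{0})
    (hh : ∀ δ ∈ S, ∀ β ∈ C δ, h δ β < lam.ord) :
    ∀ β : Ordinal.{0}, β < (Order.succ lam).ord →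
      ∀ αf f, Q2Cond lam S C h αf f → αf ≤ β →
        ∃ f', Q2Cond lam S C h β f' ∧ Q2Le αf f β f' := by
  classical
  have hSlim : ∀ δ ∈ S, Order.IsSuccLimit δ := fun δ hδ =>
    Ordinal.aleph0_le_cof.1 (by rw [(hS δ hδ).2]; exact hreg.aleph0_le)
  intro β
  induction β using Ordinal.induction with
  | h β IH =>
  intro hβord αf f hf hle
  rcases hle.eq_or_lt with rfl | hαβ
  · exact ⟨f, hf, ⟨le_rfl, fun _ _ => rfl⟩⟩
  rcases Ordinal.zero_or_succ_or_isSuccLimit β with rfl | ⟨γ, rfl⟩ | hlim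
  · exact absurd hαβ (not_lt_of_ge (zero_le : 0 ≤ αf))
  · -- successor case
    have hγβ : γ < Order.succ γ := Order.lt_succ γ
    have hγord : γ < (Order.succ lam).ord := hγβ.trans hβord
    have hαγ : αf ≤ γ := Order.lt_succ_iff.1 hαβ
    obtain ⟨f₁, hf₁, hf₁le⟩ := IH γ hγβ hγord αf f hf hαγ
    have h0 : (0 : Ordinal.{0}) < lam.ord := by
      rw [Cardinal.lt_ord]
      simpa using Cardinal.aleph0_pos.trans_le hreg.aleph0_le
    refine ⟨fun ξ => if ξ = γ then 0 else f₁ ξ, ⟨hβord, ?_, ?_⟩, ?_⟩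
    · intro ξ hξ
      dsimp only
      by_cases hcase : ξ = γ
      · rw [if_pos hcase]; exact h0
      · rw [if_neg hcase]
        exact hf₁.2.1 ξ (lt_of_le_of_ne (Order.lt_succ_iff.1 hξ) hcase)
    · intro δ hδ hδle
      have hδγ : δ ≤ γ := by
        rcases hδle.eq_or_lt with rfl | hlt'
        · exact absurd ((hSlim _ hδ).succ_lt (Order.lt_succ γ)) (lt_irrefl _)
        · exact Order.lt_succ_iff.1 hlt'
      obtain ⟨γ₁, hγ₁, hγ₁'⟩ := hf₁.2.2 δ hδ hδγ
      refine ⟨γ₁, hγ₁, fun ξ hξC hγξ => ?_⟩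
      dsimp only
      rw [if_neg (ne_of_lt (lt_of_lt_of_le ((hC δ hδ).1.1 ξ hξC) hδγ))]
      exact hγ₁' ξ hξC hγξ
    · refine q2le_trans hf₁le ⟨(Order.le_succ γ), fun ξ hξ => if_neg (ne_of_lt hξ)⟩
  · -- limit case
    set o : Ordinal.{0} := β.cof.ord with ho
    obtain ⟨c, hc⟩ := Ordinal.exists_fundamental_sequence β
    have hoβle : o ≤ lam.ord := by
      refine Cardinal.ord_le_ord.2 ((Ordinal.cof_le_card β).trans ?_)
      exact Order.lt_succ_iff.1 (Cardinal.lt_ord.1 hβord)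
    have hicard : ∀ i, i < o → i.card < lam := fun i hi =>
      Cardinal.lt_ord.1 (hi.trans_le hoβle)
    set Cnd := (Ordinal.{0} × (Ordinal.{0} → Ordinal.{0})) with hCnd
    set P : Ordinal.{0} → Cnd → Prop := fun i g =>
      Q2Cond lam S C h g.1 g.2 ∧ Q2Le αf f g.1 g.2 ∧ g.1 < β ∧
        ∀ hi : i < o, c i hi < g.1 with hP
    set r : Ordinal.{0} → Cnd → (Ordinal.{0} → Cnd) → Prop := fun i g G =>
      i < o → (P i g ∧ ∀ j (hj : j < i), (G j).1 < g.1 ∧ Q2Le (G j).1 (G j).2 g.1 g.2)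
      with hrdef
    have hmono : ∀ i g (G G' : Ordinal.{0} → Cnd), (∀ j, j < i → G j = G' j) →
        r i g G → r i g G' := by
      intro i g G G' hGG hr hio
      refine ⟨(hr hio).1, fun j hj => ?_⟩
      rw [← hGG j hj]
      exact (hr hio).2 j hj
    have hex : ∀ (G : Ordinal.{0} → Cnd) (i), (∀ j, j < i → r j (G j) G) → ∃ g, r i g G := by
      intro G i hprev
      by_cases hio : i < o
      · have hprev' : ∀ j (hj : j < i), P j (G j) ∧ ∀ k (hk : k < j), (G k).1 < (G j).1 ∧
            Q2Le (G k).1 (G k).2 (G j).1 (G j).2 :=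
          fun j hj => hprev j hj (hj.trans hio)
        have hbβ : Ordinal.bsup i (fun j _ => (G j).1) < β :=
          Ordinal.bsup_lt_ord (Cardinal.lt_ord.1 hio) fun j hj => (hprev' j hj).1.2.2.1
        set s : Ordinal.{0} := max αf (Ordinal.bsup i fun j _ => (G j).1) with hs
        have hsβ : s < β := max_lt hαβ hbβ
        have hchain : ∀ j₁ (h₁ : j₁ < i) j₂ (h₂ : j₂ < i), j₁ ≤ j₂ →
            Q2Le (G j₁).1 (G j₁).2 (G j₂).1 (G j₂).2 := by
          intro j₁ h₁ j₂ h₂ hle'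
          rcases hle'.eq_or_lt with rfl | hlt'
          · exact ⟨le_rfl, fun _ _ => rfl⟩
          · exact ((hprev' j₂ h₂).2 j₁ hlt').2
        set u : Ordinal.{0} → Ordinal.{0} := fun ξ =>
          if H : ∃ j, ∃ _ : j < i, ξ < (G j).1 then (G H.choose).2 ξ else f ξ with hu
        have huval : ∀ j (hj : j < i) ξ, ξ < (G j).1 → u ξ = (G j).2 ξ := by
          intro j hj ξ hξ
          have H : ∃ j, ∃ _ : j < i, ξ < (G j).1 := ⟨j, hj, hξ⟩
          simp only [hu, dif_pos H]
          obtain ⟨hj', hξ'⟩ := H.choose_spec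
          rcases le_total H.choose j with hcj | hcj
          · exact ((hchain _ hj' _ hj hcj).2 ξ hξ').symm
          · exact (hchain _ hj _ hj' hcj).2 ξ hξ
        have hufval : ∀ ξ, ξ < αf → u ξ = f ξ := by
          intro ξ hξ
          simp only [hu]
          split_ifs with H
          · obtain ⟨hj', hξ'⟩ := H.choose_spec
            exact (hprev' _ hj').1.2.1.2 ξ hξ
          · rfl
        have hucond : Q2Cond lam S C h s u := by
          refine ⟨hsβ.trans hβord, ?_, ?_⟩
          · intro ξ hξ
            rcases lt_or_ge ξ αf with hξα | hξα
            · rw [hufval ξ hξα]; exact hf.2.1 ξ hξα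
            · have hξb : ξ < Ordinal.bsup i fun j _ => (G j).1 :=
                (lt_max_iff.1 hξ).resolve_left (not_lt.2 hξα)
              obtain ⟨j, hj, hξj⟩ := (Ordinal.lt_bsup _).1 hξb
              rw [huval j hj ξ hξj]
              exact (hprev' j hj).1.1.2.1 ξ hξj
          · intro δ hδ hδs
            by_cases hcov : ∃ j, ∃ _ : j < i, δ ≤ (G j).1
            · obtain ⟨j, hj, hδj⟩ := hcov
              obtain ⟨γ₁, hγ₁, hγ₁'⟩ := (hprev' j hj).1.1.2.2 δ hδ hδj
              refine ⟨γ₁, hγ₁, fun ξ hξC hγξ => ?_⟩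
              rw [huval j hj ξ (((hC δ hδ).1.1 ξ hξC).trans_le hδj)]
              exact hγ₁' ξ hξC hγξ
            · push_neg at hcov
              rcases le_or_gt δ αf with hδα | hδα
              · obtain ⟨γ₁, hγ₁, hγ₁'⟩ := hf.2.2 δ hδ hδα
                refine ⟨γ₁, hγ₁, fun ξ hξC hγξ => ?_⟩
                rw [hufval ξ (((hC δ hδ).1.1 ξ hξC).trans_le hδα)]
                exact hγ₁' ξ hξC hγξ
              · exfalso
                have hδb : δ ≤ Ordinal.bsup i fun j _ => (G j).1 :=
                  (le_max_iff.1 hδs).resolve_left (not_le.2 hδα)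
                have hbδ : Ordinal.bsup i (fun j _ => (G j).1) ≤ δ :=
                  Ordinal.bsup_le fun j hj => (hcov j hj).le
                have hδeq : δ = Ordinal.bsup i fun j _ => (G j).1 := le_antisymm hδb hbδ
                rcases Ordinal.zero_or_succ_or_isSuccLimit i with rfl | ⟨k, hik⟩ | hilim
                · rw [Ordinal.bsup_zero] at hδeq
                  rw [hδeq] at hδα
                  exact not_lt_of_ge (zero_le : 0 ≤ αf) hδα
                · have hk : k < i := hik ▸ Order.lt_succ k
                  have h1 : (G k).1 < Ordinal.bsup i fun j _ => (G j).1 :=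
                    hδeq ▸ hcov k hk
                  obtain ⟨j, hj, hkj⟩ := (Ordinal.lt_bsup _).1 h1
                  have h2 : (G j).1 ≤ (G k).1 := by
                    refine (hchain j hj k hk ?_).1
                    rw [← hik] at hj
                    exact Order.lt_succ_iff.1 hj
                  exact absurd (hkj.trans_le h2) (lt_irrefl _)
                · have hcof : (Ordinal.bsup i fun j _ => (G j).1).cof ≤ i.card := by
                    apply Ordinal.cof_bsup_le
                    intro j hj
                    have hj1 : Order.succ j < i := hilim.succ_lt hj
                    exact lt_of_lt_of_le ((hprev' _ hj1).2 j (Order.lt_succ j)).1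
                      (Ordinal.le_bsup _ _ hj1)
                  rw [← hδeq, (hS δ hδ).2] at hcof
                  exact absurd (hcof.trans_lt (hicard i hio)) (lt_irrefl _)
        have hule : Q2Le αf f s u := ⟨le_max_left _ _, fun ξ hξ => hufval ξ hξ⟩
        have hujle : ∀ j (hj : j < i), Q2Le (G j).1 (G j).2 s u :=
          fun j hj => ⟨(Ordinal.le_bsup _ j hj).trans (le_max_right _ _),
            fun ξ hξ => huval j hj ξ hξ⟩
        set d : Ordinal.{0} := Order.succ (max s (c i hio)) with hd
        have hdβ : d < β := hlim.succ_lt (max_lt hsβ (hc.lt hio))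
        have hsd : s ≤ d := (le_max_left _ _).trans (Order.le_succ _)
        obtain ⟨g', hg', hg'le⟩ := IH d hdβ (hdβ.trans hβord) s u hucond hsd
        refine ⟨(d, g'), fun _ => ⟨⟨hg', q2le_trans hule hg'le, hdβ, fun hi' => ?_⟩,
          fun j hj => ⟨?_, q2le_trans (q2le_trans (hujle j hj) hg'le)
            ⟨le_rfl, fun _ _ => rfl⟩⟩⟩⟩
        · exact lt_of_le_of_lt (le_max_right s _) (Order.lt_succ _)
        · exact lt_of_le_of_lt ((Ordinal.le_bsup _ j hj).trans (le_max_right αf _))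
            ((le_max_left _ _).trans_lt (Order.lt_succ _))
      · exact ⟨(αf, f), fun hio' => absurd hio' hio⟩
    obtain ⟨G, hG⟩ := exists_wf_rec r hmono hex
    have hGp : ∀ i (hi : i < o), P i (G i) ∧ ∀ j (hj : j < i), (G j).1 < (G i).1 ∧
        Q2Le (G j).1 (G j).2 (G i).1 (G i).2 := fun i hi => hG i hi
    have hchain : ∀ j₁ (h₁ : j₁ < o) j₂ (h₂ : j₂ < o), j₁ ≤ j₂ →
        Q2Le (G j₁).1 (G j₁).2 (G j₂).1 (G j₂).2 := by
      intro j₁ h₁ j₂ h₂ hle'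
      rcases hle'.eq_or_lt with rfl | hlt'
      · exact ⟨le_rfl, fun _ _ => rfl⟩
      · exact ((hGp j₂ h₂).2 j₁ hlt').2
    set u : Ordinal.{0} → Ordinal.{0} := fun ξ =>
      if H : ∃ j, ∃ _ : j < o, ξ < (G j).1 then (G H.choose).2 ξ else f ξ with hu
    have huval : ∀ j (hj : j < o) ξ, ξ < (G j).1 → u ξ = (G j).2 ξ := by
      intro j hj ξ hξ
      have H : ∃ j, ∃ _ : j < o, ξ < (G j).1 := ⟨j, hj, hξ⟩
      simp only [hu, dif_pos H]
      obtain ⟨hj', hξ'⟩ := H.choose_spec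
      rcases le_total H.choose j with hcj | hcj
      · exact ((hchain _ hj' _ hj hcj).2 ξ hξ').symm
      · exact (hchain _ hj _ hj' hcj).2 ξ hξ
    have hufval : ∀ ξ, ξ < αf → u ξ = f ξ := by
      intro ξ hξ
      simp only [hu]
      split_ifs with H
      · obtain ⟨hj', hξ'⟩ := H.choose_spec
        exact (hGp _ hj').1.2.1.2 ξ hξ
      · rfl
    have hucov : ∀ ξ, ξ < β → ∃ j, ∃ _ : j < o, ξ < (G j).1 := by
      intro ξ hξ
      rw [← hc.blsub_eq] at hξ
      obtain ⟨j, hj, hξj⟩ := Ordinal.lt_blsub_iff.1 hξ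
      exact ⟨j, hj, hξj.trans_lt ((hGp j hj).1.2.2.2 hj)⟩
    have huvalβ : ∀ ξ, ξ < β → u ξ < lam.ord := by
      intro ξ hξ
      obtain ⟨j, hj, hξj⟩ := hucov ξ hξ
      rw [huval j hj ξ hξj]
      exact (hGp j hj).1.1.2.1 ξ hξj
    have hδwit : ∀ δ ∈ S, δ < β → ∃ γ₁ < δ, ∀ ξ ∈ C δ, γ₁ ≤ ξ → u ξ = h δ ξ := by
      intro δ hδ hδβ
      obtain ⟨j, hj, hδj⟩ := hucov δ hδβ
      obtain ⟨γ₁, hγ₁, hγ₁'⟩ := (hGp j hj).1.1.2.2 δ hδ hδj.le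
      refine ⟨γ₁, hγ₁, fun ξ hξC hγξ => ?_⟩
      rw [huval j hj ξ (((hC δ hδ).1.1 ξ hξC).trans hδj)]
      exact hγ₁' ξ hξC hγξ
    by_cases hβS : β ∈ S
    · refine ⟨fun ξ => if ξ ∈ C β ∧ αf ≤ ξ then h β ξ else u ξ,
        ⟨hβord, ?_, ?_⟩, hαβ.le, ?_⟩
      · intro ξ hξ
        dsimp only
        by_cases hcase : ξ ∈ C β ∧ αf ≤ ξ
        · rw [if_pos hcase]; exact hh β hβS ξ hcase.1
        · rw [if_neg hcase]; exact huvalβ ξ hξ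
      · intro δ hδ hδβ'
        rcases hδβ'.eq_or_lt with rfl | hδβ
        · exact ⟨αf, hαβ, fun ξ hξC hαξ => if_pos ⟨hξC, hαξ⟩⟩
        · obtain ⟨γ₁, hγ₁, hγ₁'⟩ := hδwit δ hδ hδβ
          obtain ⟨b, hb, hb'⟩ := lemA lam (hS δ hδ).2 (hC β hβS).1 (hC β hβS).2 hδβ
          refine ⟨max γ₁ b, max_lt hγ₁ hb, fun ξ hξC hγξ => ?_⟩
          have hξδ : ξ < δ := (hC δ hδ).1.1 ξ hξC
          dsimp only
          rw [if_neg, hγ₁' ξ hξC ((le_max_left _ _).trans hγξ)]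
          rintro ⟨hξCβ, -⟩
          exact absurd ((le_max_right γ₁ b).trans hγξ) (not_le.2 (hb' ξ hξCβ hξδ))
      · intro ξ hξ
        dsimp only
        rw [if_neg, hufval ξ hξ]
        rintro ⟨-, hhξ⟩
        exact absurd hξ (not_lt.2 hhξ)
    · refine ⟨u, ⟨hβord, huvalβ, ?_⟩, hαβ.le, hufval⟩
      intro δ hδ hδβ'
      rcases hδβ'.eq_or_lt with rfl | hδβ
      · exact absurd hδ hβS
      · exact hδwit δ hδ hδβ

/-- For `λ` regular uncountable, `S ⊆ {δ < λ⁺ : cf δ = λ}`, clubs `C_δ` of `δ` of order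
type `λ` and colourings `h_δ : C_δ → λ`, for every `β < λ⁺` the set
`I_β = {f ∈ Q²_{C̄,h̄} : β < α_f}` is dense: every condition has an extension whose domain
exceeds `β`. -/
theorem stmt12 (lam : Cardinal.{0}) (hreg : lam.IsRegular) (hunc : Cardinal.aleph0 < lam)
    (S : Set Ordinal.{0}) (hS : ∀ δ ∈ S, δ < (Order.succ lam).ord ∧ δ.cof = lam)
    (C : Ordinal.{0} → Set Ordinal.{0})
    (hC : ∀ δ ∈ S, IsClubBelow (C δ) δ ∧ otype (C δ) = Ordinal.lift.{1} lam.ord)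
    (h : Ordinal.{0} → Ordinal.{0} → Ordinal.{0})
    (hh : ∀ δ ∈ S, ∀ β ∈ C δ, h δ β < lam.ord)
    (β : Ordinal.{0}) (hβ : β < (Order.succ lam).ord)
    (αf : Ordinal.{0}) (f : Ordinal.{0} → Ordinal.{0})
    (hcond : Q2Cond lam S C h αf f) :
    ∃ (α' : Ordinal.{0}) (f' : Ordinal.{0} → Ordinal.{0}),
      Q2Cond lam S C h α' f' ∧ Q2Le αf f α' f' ∧ β < α' := by
  have hordlim : Order.IsSuccLimit ((Order.succ lam).ord) :=
    Cardinal.isSuccLimit_ord (hreg.aleph0_le.trans (Order.le_succ lam))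
  set β' : Ordinal.{0} := Order.succ (max αf β) with hβ'def
  have hβ' : β' < (Order.succ lam).ord := hordlim.succ_lt (max_lt hcond.1 hβ)
  obtain ⟨f', hf', hle'⟩ := q2main lam hreg S hS C hC h hh β' hβ' αf f hcond
    ((le_max_left _ _).trans (Order.le_succ _))
  exact ⟨β', f', hf', hle', (le_max_right _ _).trans_lt (Order.lt_succ _)⟩
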